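/- If G has finite NCC and H ≤ G has finite index, then NCC(H) ≤ [G:H] · NCC(G); in particular H has finite NCC. -/

import Mathlib

/-- `CC G Φ`: the smallest number of cyclic subgroups of `G` whose `Φ`-orbits cover `G`. -/
noncomputable def CC (G Φ : Type*) [Group G] [Group Φ] [MulDistribMulAction Φ G] : ℕ∞ :=
  sInf {n : ℕ∞ | ∃ s : Finset G, (s.card : ℕ∞) = n ∧
    ∀ x : G, ∃ g ∈ s, ∃ φ : Φ, x ∈ Subgroup.zpowers (φ • g)}

/-- `NCC G`: the smallest number of cyclic subgroups of `G` whose conjugacy classes cover `G`. -/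
noncomputable def NCC (G : Type*) [Group G] : ℕ∞ := CC G (ConjAct G)

lemma zpowers_isCyclic' {G : Type*} [Group G] (y : G) : IsCyclic ↥(Subgroup.zpowers y) := by
  refine ⟨⟨⟨y, Subgroup.mem_zpowers y⟩, fun x => ?_⟩⟩
  obtain ⟨k, hk⟩ := Subgroup.mem_zpowers_iff.mp x.2
  exact Subgroup.mem_zpowers_iff.mpr ⟨k, Subtype.ext (by simpa using hk)⟩

/-- The intersection of a cyclic subgroup with `H` is cyclic, with a generator in `H`. -/
lemma cyclic_inter {G : Type*} [Group G] (y : G) (H : Subgroup G) :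
    ∃ z : G, z ∈ H ∧ ∀ w : G, w ∈ Subgroup.zpowers y → w ∈ H → w ∈ Subgroup.zpowers z := by
  haveI : IsCyclic ↥(Subgroup.zpowers y) := zpowers_isCyclic' y
  obtain ⟨ζ, hζ⟩ := IsCyclic.exists_generator (α := ↥(H.subgroupOf (Subgroup.zpowers y)))
  refine ⟨((ζ : ↥(Subgroup.zpowers y)) : G), ζ.2, fun w hw hwH => ?_⟩
  obtain ⟨k, hk⟩ := Subgroup.mem_zpowers_iff.mp
    (hζ ⟨⟨w, hw⟩, Subgroup.mem_subgroupOf.mpr hwH⟩)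
  refine Subgroup.mem_zpowers_iff.mpr ⟨k, ?_⟩
  have := congrArg (fun a : ↥(H.subgroupOf (Subgroup.zpowers y)) => ((a : ↥(Subgroup.zpowers y)) : G)) hk
  simpa using this

/-- If `G` has finite NCC and `H ≤ G` has finite index, then `NCC(H) ≤ [G:H] · NCC(G)`;
in particular `H` has finite NCC. -/
theorem stmt_4 {G : Type*} [Group G] (H : Subgroup G) [H.FiniteIndex] (hG : NCC G ≠ ⊤) :
    NCC ↥H ≤ (H.index : ℕ∞) * NCC G ∧ NCC ↥H ≠ ⊤ := by
  classical
  cases nonempty_fintype (G ⧸ H)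
  -- extract an optimal covering family for G
  have hne : {n : ℕ∞ | ∃ s : Finset G, (s.card : ℕ∞) = n ∧
      ∀ x : G, ∃ g ∈ s, ∃ φ : ConjAct G, x ∈ Subgroup.zpowers (φ • g)}.Nonempty := by
    by_contra h
    rw [Set.not_nonempty_iff_eq_empty] at h
    exact hG (by simp [NCC, CC, h])
  obtain ⟨s, hcard, hcov⟩ := csInf_mem hne
  have hcard' : (s.card : ℕ∞) = NCC G := hcard
  -- choose generators for the intersections of conjugated cyclic subgroups with H
  have key : ∀ (q : G ⧸ H) (g : G), ∃ z : G, z ∈ H ∧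
      ∀ w : G, w ∈ Subgroup.zpowers ((q.out)⁻¹ * g * q.out) → w ∈ H → w ∈ Subgroup.zpowers z :=
    fun q g => cyclic_inter _ H
  choose z hzH hzmem using key
  set t : Finset ↥H :=
    (Finset.univ ×ˢ s).image (fun p => (⟨z p.1 p.2, hzH p.1 p.2⟩ : ↥H)) with ht
  -- t covers H up to conjugacy
  have hcovH : ∀ x : ↥H, ∃ g' ∈ t, ∃ ψ : ConjAct ↥H, x ∈ Subgroup.zpowers (ψ • g') := by
    intro x
    obtain ⟨g, hgs, φ, hx⟩ := hcov (x : G)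
    set u := ConjAct.ofConjAct φ with hu
    set q : G ⧸ H := QuotientGroup.mk u⁻¹ with hq
    set c := q.out with hc
    have hmk : (QuotientGroup.mk c : G ⧸ H) = QuotientGroup.mk u⁻¹ := by
      rw [hc]; exact QuotientGroup.out_eq' q
    have hhH : u * c ∈ H := by
      have h1 := (QuotientGroup.eq (s := H)).mp hmk.symm
      simpa using h1
    set h := u * c with hh
    have hconj : φ • g = h * (c⁻¹ * g * c) * h⁻¹ := by
      rw [ConjAct.smul_def, ← hu, hh]
      group
    obtain ⟨k, hk⟩ := Subgroup.mem_zpowers_iff.mp hx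
    rw [hconj] at hk
    have hk2 : (c⁻¹ * g * c) ^ k = h⁻¹ * (x : G) * h := by
      have : h * (c⁻¹ * g * c) ^ k * h⁻¹ = (x : G) := by
        rw [← hk, conj_zpow]
      rw [← this]; group
    have hwH : h⁻¹ * (x : G) * h ∈ H := H.mul_mem (H.mul_mem (H.inv_mem hhH) x.2) hhH
    have hwz : h⁻¹ * (x : G) * h ∈ Subgroup.zpowers (z q g) :=
      hzmem q g _ (Subgroup.mem_zpowers_iff.mpr ⟨k, hk2⟩) hwH
    obtain ⟨m, hm⟩ := Subgroup.mem_zpowers_iff.mp hwz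
    refine ⟨⟨z q g, hzH q g⟩, Finset.mem_image.mpr ⟨⟨q, g⟩, by simpa using hgs, rfl⟩,
      ConjAct.toConjAct (⟨h, hhH⟩ : ↥H), Subgroup.mem_zpowers_iff.mpr ⟨m, ?_⟩⟩
    apply Subtype.ext
    push_cast [ConjAct.smul_def, ConjAct.ofConjAct_toConjAct, conj_zpow]
    rw [hm]
    group
  -- conclude
  have hle : NCC ↥H ≤ (t.card : ℕ∞) := by
    apply sInf_le
    exact ⟨t, rfl, hcovH⟩
  have hcardt : t.card ≤ H.index * s.card := by
    calc t.card ≤ (Finset.univ ×ˢ s).card := Finset.card_image_le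
      _ = Fintype.card (G ⧸ H) * s.card := by simp [Finset.card_product]
      _ = H.index * s.card := by
          rw [Subgroup.index_eq_card, Nat.card_eq_fintype_card]
  have hle2 : NCC ↥H ≤ (H.index : ℕ∞) * NCC G := by
    calc NCC ↥H ≤ (t.card : ℕ∞) := hle
      _ ≤ ((H.index * s.card : ℕ) : ℕ∞) := by exact_mod_cast hcardt
      _ = (H.index : ℕ∞) * (s.card : ℕ∞) := by push_cast; ring
      _ = (H.index : ℕ∞) * NCC G := by rw [hcard']
  exact ⟨hle2, ne_top_of_le_ne_top (WithTop.natCast_ne_top _) hle⟩
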